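/- arXiv:1912.10398 — 3 statements merged into one kernel-verified Lean document; each statement's English description precedes it below -/
import Mathlib

section
/- Let X be a real-valued random variable whose cumulative distribution function F is continuous and strictly increasing, and suppose X has a density f. Fix β ∈ (0,1) and ε > 0, and suppose f(x) ≥ l > 0 for all x ∈ [V_β − ε, V_β + ε]. Then for every n ≥ 1, P( |V̂_{n,β} − V_β| ≥ ε ) ≤ 2 exp(−2 n l² ε²). -/
open MeasureTheory ProbabilityTheory Set Real

/-- The cumulative distribution function of a measure on `ℝ`. -/
noncomputable def cdfFn (ν : MeasureTheory.Measure ℝ) (x : ℝ) : ℝ := (ν (Set.Iic x)).toReal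

/-- Value-at-risk at level `β`: `V_β = inf {c : F c ≥ β}`. -/
noncomputable def VaR (ν : MeasureTheory.Measure ℝ) (β : ℝ) : ℝ := sInf {c : ℝ | β ≤ cdfFn ν c}

/-- The empirical distribution function built from the first `n` samples. -/
noncomputable def edf {Ω : Type*} (Xs : ℕ → Ω → ℝ) (n : ℕ) (ω : Ω) (x : ℝ) : ℝ :=
  ((Finset.range n).filter (fun i => Xs i ω ≤ x)).card / n

/-- The empirical value-at-risk at level `β` built from the first `n` samples
(with the convention that at level `0` it is the minimum of the samples). -/
noncomputable def empVaR {Ω : Type*} (Xs : ℕ → Ω → ℝ) (n : ℕ) (ω : Ω) (β : ℝ) : ℝ :=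
  if β ≤ 0 then sInf ((fun i => Xs i ω) '' {i : ℕ | i < n})
  else sInf {x : ℝ | β ≤ edf Xs n ω x}



section aux
set_option linter.unusedSectionVars false

lemma bernoulli_key (p : ℝ) (hp0 : 0 ≤ p) (hp1 : p ≤ 1) (t : ℝ) :
    1 + p * (Real.exp t - 1) ≤ Real.exp (t * p + t ^ 2 / 8) := by
  set D : ℝ → ℝ := fun s => 1 + p * (Real.exp s - 1) with hDdef
  have hD : ∀ s, 0 < D s := by
    intro s
    simp only [hDdef]
    rcases lt_or_eq_of_le hp1 with h | h
    · nlinarith [Real.exp_pos s, mul_nonneg hp0 (Real.exp_pos s).le]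
    · rw [← h]
      nlinarith [Real.exp_pos s]
  have hDderiv : ∀ s, HasDerivAt D (p * Real.exp s) s := by
    intro s
    have h1 : HasDerivAt (fun s : ℝ => Real.exp s - 1) (Real.exp s) s :=
      (Real.hasDerivAt_exp s).sub_const 1
    exact (h1.const_mul p).const_add 1
  set q : ℝ → ℝ := fun s => p * Real.exp s / D s with hqdef
  have hq0 : ∀ s, 0 ≤ q s := fun s =>
    div_nonneg (mul_nonneg hp0 (Real.exp_pos s).le) (hD s).le
  have hq1 : ∀ s, q s ≤ 1 := by
    intro s
    rw [hqdef, div_le_one (hD s)]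
    simp only [hDdef]
    nlinarith
  set g : ℝ → ℝ := fun s => s * p + s ^ 2 / 8 - Real.log (D s) with hgdef
  set g' : ℝ → ℝ := fun s => p + s / 4 - q s with hg'def
  have hgderiv : ∀ s, HasDerivAt g (g' s) s := by
    intro s
    have hlog : HasDerivAt (fun s => Real.log (D s)) (p * Real.exp s / D s) s :=
      (hDderiv s).log (hD s).ne'
    have h1 : HasDerivAt (fun s : ℝ => s * p + s ^ 2 / 8)
        (p + s / 4) s := by
      have := ((hasDerivAt_id s).mul_const p).add ((hasDerivAt_pow 2 s).div_const 8)
      exact this.congr_deriv (by norm_num; ring)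
    exact h1.sub hlog
  have hg'deriv : ∀ s, HasDerivAt g' (1 / 4 - q s * (1 - q s)) s := by
    intro s
    have hqd : HasDerivAt q (q s * (1 - q s)) s := by
      have h := ((Real.hasDerivAt_exp s).const_mul p).div (hDderiv s) (hD s).ne'
      have h0 : (1 + p * (Real.exp s - 1)) ≠ 0 := by
        have := hD s; simp only [hDdef] at this; linarith
      refine h.congr_deriv ?_
      simp only [hqdef, hDdef]
      field_simp [h0]
    have h1 : HasDerivAt (fun s : ℝ => p + s / 4) (1 / 4) s := by
      exact ((hasDerivAt_id s).div_const 4).const_add p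
    exact h1.sub hqd
  have hg'mono : Monotone g' := by
    have hdiff : Differentiable ℝ g' := fun s => (hg'deriv s).differentiableAt
    apply monotone_of_deriv_nonneg hdiff
    intro s
    rw [(hg'deriv s).deriv]
    nlinarith [sq_nonneg (q s - 1 / 2)]
  have hg'0 : g' 0 = 0 := by
    simp [hg'def, hqdef, hDdef]
  have hg0 : g 0 = 0 := by
    simp [hgdef, hDdef]
  have hcont : Continuous g :=
    continuous_iff_continuousAt.2 fun x => (hgderiv x).continuousAt
  have hmono2 : MonotoneOn g (Set.Ici 0) := by
    apply monotoneOn_of_deriv_nonneg (convex_Ici 0) hcont.continuousOn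
      (fun x _ => (hgderiv x).differentiableAt.differentiableWithinAt)
    intro x hx
    rw [(hgderiv x).deriv]
    have hx0 : (0:ℝ) ≤ x := interior_subset hx
    calc (0:ℝ) = g' 0 := hg'0.symm
      _ ≤ g' x := hg'mono hx0
  have hanti2 : AntitoneOn g (Set.Iic 0) := by
    apply antitoneOn_of_deriv_nonpos (convex_Iic 0) hcont.continuousOn
      (fun x _ => (hgderiv x).differentiableAt.differentiableWithinAt)
    intro x hx
    rw [(hgderiv x).deriv]
    have hx0 : x ≤ (0:ℝ) := Set.mem_Iic.1 (interior_subset hx)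
    calc g' x ≤ g' 0 := hg'mono hx0
      _ = 0 := hg'0
  have hgnonneg : ∀ s, 0 ≤ g s := by
    intro s
    rcases le_total 0 s with h | h
    · have := hmono2 Set.self_mem_Ici (Set.mem_Ici.2 h) h
      linarith [hg0 ▸ this]
    · have := hanti2 (Set.mem_Iic.2 h) Set.self_mem_Iic h
      linarith [hg0 ▸ this]
  have := hgnonneg t
  have hlog_le : Real.log (D t) ≤ t * p + t ^ 2 / 8 := by
    simp only [hgdef] at this
    linarith
  calc D t = Real.exp (Real.log (D t)) := (Real.exp_log (hD t)).symm
    _ ≤ Real.exp (t * p + t ^ 2 / 8) := Real.exp_le_exp.2 hlog_le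


variable {Ω : Type*} [MeasurableSpace Ω] {μ : Measure Ω} [IsProbabilityMeasure μ]

lemma bern_integrable {Y : Ω → ℝ} (hY : Measurable Y)
    (hval : ∀ ω, Y ω = 0 ∨ Y ω = 1) : Integrable Y μ := by
  refine Integrable.mono' (integrable_const (1:ℝ)) hY.aestronglyMeasurable
    (Filter.Eventually.of_forall fun ω => ?_)
  rcases hval ω with h | h <;> simp [h]

lemma bern_exp_eq {Y : Ω → ℝ} (hval : ∀ ω, Y ω = 0 ∨ Y ω = 1) (t : ℝ) :
    (fun ω => Real.exp (t * Y ω)) = fun ω => 1 + (Real.exp t - 1) * Y ω := by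
  funext ω
  rcases hval ω with h | h <;> simp [h]

lemma bern_exp_integrable {Y : Ω → ℝ} (hY : Measurable Y)
    (hval : ∀ ω, Y ω = 0 ∨ Y ω = 1) (t : ℝ) :
    Integrable (fun ω => Real.exp (t * Y ω)) μ := by
  rw [bern_exp_eq hval t]
  exact (integrable_const 1).add ((bern_integrable hY hval).const_mul _)

lemma bern_mean_mem {Y : Ω → ℝ} (hY : Measurable Y)
    (hval : ∀ ω, Y ω = 0 ∨ Y ω = 1) :
    0 ≤ (∫ ω, Y ω ∂μ) ∧ (∫ ω, Y ω ∂μ) ≤ 1 := by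
  constructor
  · exact integral_nonneg fun ω => by rcases hval ω with h | h <;> simp [h]
  · have h1 : (∫ ω, Y ω ∂μ) ≤ ∫ _, (1:ℝ) ∂μ := by
      refine integral_mono (bern_integrable hY hval) (integrable_const 1) fun ω => ?_
      rcases hval ω with h | h <;> simp [h]
    simpa using h1

lemma bern_mgf_le {Y : Ω → ℝ} (hY : Measurable Y)
    (hval : ∀ ω, Y ω = 0 ∨ Y ω = 1) (t : ℝ) :
    mgf Y μ t ≤ Real.exp (t * (∫ ω, Y ω ∂μ) + t ^ 2 / 8) := by
  have h1 : mgf Y μ t = 1 + (∫ ω, Y ω ∂μ) * (Real.exp t - 1) := by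
    rw [mgf, bern_exp_eq hval t]
    rw [integral_add (integrable_const 1) ((bern_integrable hY hval).const_mul _)]
    simp only [mul_comm (Real.exp t - 1)]
    rw [integral_mul_const]
    simp
  rw [h1]
  exact bernoulli_key _ (bern_mean_mem hY hval).1 (bern_mean_mem hY hval).2 t

lemma hoeff_core (Y : ℕ → Ω → ℝ) (hmeas : ∀ i, Measurable (Y i))
    (hind : iIndepFun Y μ)
    (hval : ∀ i ω, Y i ω = 0 ∨ Y i ω = 1) (n : ℕ) (t : ℝ) :
    Integrable (fun ω => Real.exp (t * (∑ i ∈ Finset.range n, Y i) ω)) μ ∧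
      mgf (∑ i ∈ Finset.range n, Y i) μ t
        ≤ Real.exp (t * (∑ i ∈ Finset.range n, ∫ ω, Y i ω ∂μ) + n * (t ^ 2 / 8)) := by
  constructor
  · exact iIndepFun.integrable_exp_mul_sum hind hmeas
      (fun i _ => bern_exp_integrable (hmeas i) (hval i) t)
  · rw [iIndepFun.mgf_sum hind hmeas]
    calc ∏ i ∈ Finset.range n, mgf (Y i) μ t
        ≤ ∏ i ∈ Finset.range n, Real.exp (t * (∫ ω, Y i ω ∂μ) + t ^ 2 / 8) :=
          Finset.prod_le_prod (fun i _ => mgf_nonneg)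
            (fun i _ => bern_mgf_le (hmeas i) (hval i) t)
      _ = Real.exp (∑ i ∈ Finset.range n, (t * (∫ ω, Y i ω ∂μ) + t ^ 2 / 8)) :=
          (Real.exp_sum _ _).symm
      _ = _ := by
          rw [Finset.sum_add_distrib, Finset.sum_const, ← Finset.mul_sum]
          simp [nsmul_eq_mul]

lemma hoeff_ge (Y : ℕ → Ω → ℝ) (hmeas : ∀ i, Measurable (Y i))
    (hind : iIndepFun Y μ)
    (hval : ∀ i ω, Y i ω = 0 ∨ Y i ω = 1) (n : ℕ) (a : ℝ) (ha : 0 < a) :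
    (μ {ω | (∑ i ∈ Finset.range n, ∫ ω', Y i ω' ∂μ) + n * a ≤ ∑ i ∈ Finset.range n, Y i ω}).toReal
      ≤ Real.exp (-2 * n * a ^ 2) := by
  obtain ⟨hint, hmgf⟩ := hoeff_core Y hmeas hind hval n (4 * a)
  have h := measure_ge_le_exp_mul_mgf (X := ∑ i ∈ Finset.range n, Y i) (μ := μ)
    ((∑ i ∈ Finset.range n, ∫ ω', Y i ω' ∂μ) + n * a) (by positivity) hint
  have hset : {ω | (∑ i ∈ Finset.range n, ∫ ω', Y i ω' ∂μ) + n * a ≤ ∑ i ∈ Finset.range n, Y i ω}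
      = {ω | (∑ i ∈ Finset.range n, ∫ ω', Y i ω' ∂μ) + n * a ≤ (∑ i ∈ Finset.range n, Y i) ω} := by
    ext ω; simp [Finset.sum_apply]
  rw [hset]
  refine h.trans ?_
  calc Real.exp (-(4 * a) * ((∑ i ∈ Finset.range n, ∫ ω', Y i ω' ∂μ) + n * a)) *
        mgf (∑ i ∈ Finset.range n, Y i) μ (4 * a)
      ≤ Real.exp (-(4 * a) * ((∑ i ∈ Finset.range n, ∫ ω', Y i ω' ∂μ) + n * a)) *
        Real.exp ((4 * a) * (∑ i ∈ Finset.range n, ∫ ω', Y i ω' ∂μ) + n * ((4 * a) ^ 2 / 8)) := by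
        exact mul_le_mul_of_nonneg_left hmgf (Real.exp_pos _).le
    _ = Real.exp (-2 * n * a ^ 2) := by
        rw [← Real.exp_add]; congr 1; ring

lemma hoeff_le (Y : ℕ → Ω → ℝ) (hmeas : ∀ i, Measurable (Y i))
    (hind : iIndepFun Y μ)
    (hval : ∀ i ω, Y i ω = 0 ∨ Y i ω = 1) (n : ℕ) (a : ℝ) (ha : 0 < a) :
    (μ {ω | ∑ i ∈ Finset.range n, Y i ω ≤ (∑ i ∈ Finset.range n, ∫ ω', Y i ω' ∂μ) - n * a}).toReal
      ≤ Real.exp (-2 * n * a ^ 2) := by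
  obtain ⟨hint, hmgf⟩ := hoeff_core Y hmeas hind hval n (-(4 * a))
  have h := measure_le_le_exp_mul_mgf (X := ∑ i ∈ Finset.range n, Y i) (μ := μ)
    ((∑ i ∈ Finset.range n, ∫ ω', Y i ω' ∂μ) - n * a) (by nlinarith) hint
  have hset : {ω | ∑ i ∈ Finset.range n, Y i ω ≤ (∑ i ∈ Finset.range n, ∫ ω', Y i ω' ∂μ) - n * a}
      = {ω | (∑ i ∈ Finset.range n, Y i) ω ≤ (∑ i ∈ Finset.range n, ∫ ω', Y i ω' ∂μ) - n * a} := by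
    ext ω; simp [Finset.sum_apply]
  rw [hset]
  refine h.trans ?_
  calc Real.exp (-(-(4 * a)) * ((∑ i ∈ Finset.range n, ∫ ω', Y i ω' ∂μ) - n * a)) *
        mgf (∑ i ∈ Finset.range n, Y i) μ (-(4 * a))
      ≤ Real.exp (-(-(4 * a)) * ((∑ i ∈ Finset.range n, ∫ ω', Y i ω' ∂μ) - n * a)) *
        Real.exp ((-(4 * a)) * (∑ i ∈ Finset.range n, ∫ ω', Y i ω' ∂μ) + n * ((-(4 * a)) ^ 2 / 8)) :=
        mul_le_mul_of_nonneg_left hmgf (Real.exp_pos _).le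
    _ = Real.exp (-2 * n * a ^ 2) := by
        rw [← Real.exp_add]; congr 1; ring

end aux

section aux2

section det
variable {Ω : Type*} (Xs : ℕ → Ω → ℝ) (n : ℕ) (ω : Ω) {β : ℝ}

lemma emp_plus (hβ : 0 < β) (hn : 1 ≤ n) {c : ℝ} (h : c ≤ empVaR Xs n ω β) :
    (((Finset.range n).filter (fun i => Xs i ω < c)).card : ℝ) < β * n := by
  have hn' : (0:ℝ) < n := by exact_mod_cast hn
  rw [empVaR, if_neg (not_le.2 hβ)] at h
  set S := {x : ℝ | β ≤ edf Xs n ω x} with hS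
  have hne : (Finset.range n).Nonempty := ⟨0, Finset.mem_range.2 hn⟩
  have hne' : ((Finset.range n).image (fun i => Xs i ω)).Nonempty := hne.image _
  set m := ((Finset.range n).image (fun i => Xs i ω)).min' hne' with hm
  have hbdd : BddBelow S := by
    refine ⟨m, fun x hx => ?_⟩
    have hcard : 0 < ((Finset.range n).filter (fun i => Xs i ω ≤ x)).card := by
      by_contra hc
      push_neg at hc
      interval_cases h' : ((Finset.range n).filter (fun i => Xs i ω ≤ x)).card
      · have : edf Xs n ω x = 0 := by rw [edf, h']; simp
        rw [hS, Set.mem_setOf_eq, this] at hx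
        linarith
    obtain ⟨i, hi⟩ := Finset.card_pos.1 hcard
    have hi1 := Finset.mem_filter.1 hi
    calc m ≤ Xs i ω := Finset.min'_le _ _ (Finset.mem_image_of_mem (fun i => Xs i ω) hi1.1)
      _ ≤ x := hi1.2
  have hnotmem : ∀ x < c, x ∉ S := by
    intro x hx hxS
    have := csInf_le hbdd hxS
    linarith
  set T := (Finset.range n).filter (fun i => Xs i ω < c) with hT
  rcases T.eq_empty_or_nonempty with hTe | hTne
  · rw [hTe]
    simpa using mul_pos hβ hn'
  · have hTne' : (T.image (fun i => Xs i ω)).Nonempty := hTne.image _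
    set c' := (T.image (fun i => Xs i ω)).max' hTne' with hc'
    obtain ⟨j, hjT, hjval⟩ := Finset.mem_image.1 (Finset.max'_mem _ hTne')
    have hc'lt : c' < c := by
      rw [hc', ← hjval]; exact (Finset.mem_filter.1 hjT).2
    have hedf : edf Xs n ω c' < β := by
      by_contra hcon
      exact hnotmem c' hc'lt (by rw [hS, Set.mem_setOf_eq]; linarith)
    have hsub : T ⊆ (Finset.range n).filter (fun i => Xs i ω ≤ c') := by
      intro i hi
      have hi1 := Finset.mem_filter.1 hi
      refine Finset.mem_filter.2 ⟨hi1.1, ?_⟩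
      rw [hc']
      exact Finset.le_max' _ _ (Finset.mem_image_of_mem (fun i => Xs i ω) hi)
    have hcardle : (T.card : ℝ) ≤ (((Finset.range n).filter (fun i => Xs i ω ≤ c')).card : ℝ) := by
      exact_mod_cast Finset.card_le_card hsub
    rw [edf, div_lt_iff₀ hn'] at hedf
    linarith

lemma emp_minus (hβ0 : 0 < β) (hβ1 : β ≤ 1) (hn : 1 ≤ n) {c : ℝ}
    (h : empVaR Xs n ω β ≤ c) :
    β * n ≤ (((Finset.range n).filter (fun i => Xs i ω ≤ c)).card : ℝ) := by
  have hn' : (0:ℝ) < n := by exact_mod_cast hn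
  rw [empVaR, if_neg (not_le.2 hβ0)] at h
  set S := {x : ℝ | β ≤ edf Xs n ω x} with hS
  have hne : (Finset.range n).Nonempty := ⟨0, Finset.mem_range.2 hn⟩
  have hne' : ((Finset.range n).image (fun i => Xs i ω)).Nonempty := hne.image _
  set M := ((Finset.range n).image (fun i => Xs i ω)).max' hne' with hM
  have hMS : M ∈ S := by
    rw [hS, Set.mem_setOf_eq, edf]
    have : (Finset.range n).filter (fun i => Xs i ω ≤ M) = Finset.range n := by
      refine Finset.filter_true_of_mem fun i hi => ?_
      exact Finset.le_max' _ _ (Finset.mem_image_of_mem (fun i => Xs i ω) hi)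
    rw [this, Finset.card_range, div_self hn'.ne']
    exact hβ1
  have hSne : S.Nonempty := ⟨M, hMS⟩
  have hemono : ∀ x y : ℝ, x ≤ y → edf Xs n ω x ≤ edf Xs n ω y := by
    intro x y hxy
    rw [edf, edf]
    have hcc : ((Finset.range n).filter (fun i => Xs i ω ≤ x)).card
        ≤ ((Finset.range n).filter (fun i => Xs i ω ≤ y)).card := by
      refine Finset.card_le_card ?_
      intro i hi
      have hi1 := Finset.mem_filter.1 hi
      exact Finset.mem_filter.2 ⟨hi1.1, hi1.2.trans hxy⟩
    exact div_le_div_of_nonneg_right (by exact_mod_cast hcc) hn'.le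
  have hall : ∀ x, c < x → β ≤ edf Xs n ω x := by
    intro x hx
    obtain ⟨s, hsS, hslt⟩ := exists_lt_of_csInf_lt hSne (lt_of_le_of_lt h hx)
    exact le_trans hsS (hemono s x hslt.le)
  set U := (Finset.range n).filter (fun i => Xs i ω ≤ c) with hU
  set W := (Finset.range n).filter (fun i => c < Xs i ω) with hW
  have key : ∃ x, c < x ∧ (Finset.range n).filter (fun i => Xs i ω ≤ x) = U := by
    rcases W.eq_empty_or_nonempty with hWe | hWne
    · refine ⟨c + 1, by linarith, ?_⟩
      have hle : ∀ i ∈ Finset.range n, Xs i ω ≤ c := by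
        intro i hi
        by_contra hcon
        push_neg at hcon
        exact absurd (Finset.mem_filter.2 ⟨hi, hcon⟩) (by rw [← hW, hWe]; simp)
      ext i
      simp only [Finset.mem_filter, hU]
      exact ⟨fun ⟨h1, _⟩ => ⟨h1, hle i h1⟩, fun ⟨h1, h2⟩ => ⟨h1, by linarith⟩⟩
    · have hWne' : (W.image (fun i => Xs i ω)).Nonempty := hWne.image _
      set c'' := (W.image (fun i => Xs i ω)).min' hWne' with hc''
      obtain ⟨j, hjW, hjval⟩ := Finset.mem_image.1 (Finset.min'_mem _ hWne')
      have hc''gt : c < c'' := by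
        rw [hc'', ← hjval]; exact (Finset.mem_filter.1 hjW).2
      refine ⟨(c + c'') / 2, by linarith, ?_⟩
      ext i
      simp only [Finset.mem_filter, hU]
      constructor
      · rintro ⟨h1, h2⟩
        refine ⟨h1, ?_⟩
        by_contra hcon
        push_neg at hcon
        have : c'' ≤ Xs i ω := by
          rw [hc'']
          exact Finset.min'_le _ _ (Finset.mem_image_of_mem (fun i => Xs i ω)
            (Finset.mem_filter.2 ⟨h1, hcon⟩))
        linarith
      · rintro ⟨h1, h2⟩
        exact ⟨h1, by linarith⟩
  obtain ⟨x, hcx, hfx⟩ := key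
  have := hall x hcx
  rw [edf, hfx, le_div_iff₀ hn'] at this
  linarith

end det

end aux2


lemma cdfFn_VaR_eq (ν : Measure ℝ) [IsProbabilityMeasure ν]
    (hFcont : Continuous (cdfFn ν)) (hFmono : StrictMono (cdfFn ν))
    {β : ℝ} (hβ : β ∈ Set.Ioo (0:ℝ) 1) : cdfFn ν (VaR ν β) = β := by
  have hcdf : cdfFn ν = ProbabilityTheory.cdf ν := by
    funext x
    rw [cdf_eq_real, cdfFn, measureReal_def]
  have hbot : Filter.Tendsto (cdfFn ν) Filter.atBot (nhds 0) := hcdf ▸ tendsto_cdf_atBot (μ := ν)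
  have htop : Filter.Tendsto (cdfFn ν) Filter.atTop (nhds 1) := hcdf ▸ tendsto_cdf_atTop (μ := ν)
  obtain ⟨a, ha⟩ := (hbot.eventually_lt_const hβ.1).exists
  obtain ⟨b, hb⟩ := (htop.eventually_const_lt hβ.2).exists
  have hab : a ≤ b := (hFmono.lt_iff_lt.1 (ha.trans hb)).le
  have hmem : β ∈ Set.Icc (cdfFn ν a) (cdfFn ν b) := ⟨ha.le, hb.le⟩
  obtain ⟨c, _, hc⟩ := intermediate_value_Icc hab hFcont.continuousOn hmem
  have hset : {x : ℝ | β ≤ cdfFn ν x} = Set.Ici c := by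
    ext x
    rw [Set.mem_setOf_eq, ← hc, Set.mem_Ici, hFmono.le_iff_le]
  rw [VaR, hset, csInf_Ici, hc]



/-- VaR concentration (Lemma 2): if the CDF is continuous and strictly increasing, the law has a
density bounded below by `l > 0` on `[V_β − ε, V_β + ε]`, then
`P(|V̂_{n,β} − V_β| ≥ ε) ≤ 2 exp(−2 n l² ε²)`. -/
theorem stmt_2
    {Ω : Type*} [MeasurableSpace Ω] (μ : MeasureTheory.Measure Ω) [IsProbabilityMeasure μ]
    (X : Ω → ℝ) (hX : Measurable X)
    (Xs : ℕ → Ω → ℝ) (hXs : ∀ i, Measurable (Xs i))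
    (hindep : ProbabilityTheory.iIndepFun Xs μ)
    (hident : ∀ i, ProbabilityTheory.IdentDistrib (Xs i) X μ μ)
    (f : ℝ → ℝ) (hf : Measurable f)
    (hdens : μ.map X = MeasureTheory.volume.withDensity (fun x => ENNReal.ofReal (f x)))
    (hFcont : Continuous (cdfFn (μ.map X)))
    (hFmono : StrictMono (cdfFn (μ.map X)))
    (β : ℝ) (hβ : β ∈ Set.Ioo (0 : ℝ) 1)
    (ε l : ℝ) (hε : 0 < ε) (hl : 0 < l)
    (hfl : ∀ x ∈ Set.Icc (VaR (μ.map X) β - ε) (VaR (μ.map X) β + ε), l ≤ f x)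
    (n : ℕ) (hn : 1 ≤ n) :
    (μ {ω | ε ≤ |empVaR Xs n ω β - VaR (μ.map X) β|}).toReal
      ≤ 2 * Real.exp (-2 * n * l ^ 2 * ε ^ 2) := by
  haveI hνP : IsProbabilityMeasure (μ.map X) := Measure.isProbabilityMeasure_map hX.aemeasurable
  set ν := μ.map X with hν
  set V := VaR ν β with hV
  have hFV : cdfFn ν V = β := cdfFn_VaR_eq ν hFcont hFmono hβ
  -- interval mass lower bounds
  have hmass : ∀ a b : ℝ, a ≤ b → Set.Ioc a b ⊆ Set.Icc (V - ε) (V + ε) →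
      ENNReal.ofReal (l * (b - a)) ≤ ν (Set.Ioc a b) := by
    intro a b hab hsub
    rw [hdens, withDensity_apply _ measurableSet_Ioc]
    calc ENNReal.ofReal (l * (b - a)) = ENNReal.ofReal l * volume (Set.Ioc a b) := by
          rw [Real.volume_Ioc, ENNReal.ofReal_mul hl.le]
      _ = ∫⁻ _ in Set.Ioc a b, ENNReal.ofReal l ∂volume := (setLIntegral_const _ _).symm
      _ ≤ ∫⁻ x in Set.Ioc a b, ENNReal.ofReal (f x) ∂volume := by
          refine setLIntegral_mono (hf.ennreal_ofReal) fun x hx => ?_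
          exact ENNReal.ofReal_le_ofReal (hfl x (hsub hx))
  have hsplit : ∀ a b : ℝ, a ≤ b → cdfFn ν b = cdfFn ν a + (ν (Set.Ioc a b)).toReal := by
    intro a b hab
    rw [cdfFn, cdfFn, ← Set.Iic_union_Ioc_eq_Iic hab,
      measure_union (Set.Iic_disjoint_Ioc le_rfl) measurableSet_Ioc,
      ENNReal.toReal_add (measure_ne_top _ _) (measure_ne_top _ _)]
  have htoR : ∀ a b : ℝ, a ≤ b → Set.Ioc a b ⊆ Set.Icc (V - ε) (V + ε) →
      l * (b - a) ≤ (ν (Set.Ioc a b)).toReal := by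
    intro a b hab hsub
    have := ENNReal.toReal_mono (measure_ne_top _ _) (hmass a b hab hsub)
    rwa [ENNReal.toReal_ofReal (by nlinarith)] at this
  have hF1 : β + l * ε ≤ cdfFn ν (V + ε) := by
    have h1 := htoR V (V + ε) (by linarith) (fun x hx => ⟨by linarith [hx.1], hx.2⟩)
    rw [hsplit V (V + ε) (by linarith), hFV]
    have : V + ε - V = ε := by ring
    rw [this] at h1
    linarith
  have hF2 : cdfFn ν (V - ε) ≤ β - l * ε := by
    have h1 := htoR (V - ε) V (by linarith) (fun x hx => ⟨hx.1.le, by linarith [hx.2]⟩)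
    have h2 := hsplit (V - ε) V (by linarith)
    have : V - (V - ε) = ε := by ring
    rw [this] at h1
    rw [hFV] at h2
    linarith
  -- no atoms
  have hIio : ν (Set.Iio (V + ε)) = ν (Set.Iic (V + ε)) := by
    rw [← Set.Iio_union_right, measure_union (by simp) (measurableSet_singleton _)]
    have : ν {V + ε} = 0 := by
      rw [hdens]
      exact (withDensity_absolutelyContinuous volume _) (volume_singleton)
    rw [this, add_zero]
  -- indicators
  set g₁ : ℝ → ℝ := fun x => Set.indicator (Set.Iio (V + ε)) (fun _ => (1:ℝ)) x with hg₁
  set g₂ : ℝ → ℝ := fun x => Set.indicator (Set.Iic (V - ε)) (fun _ => (1:ℝ)) x with hg₂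
  have hg₁m : Measurable g₁ := measurable_const.indicator measurableSet_Iio
  have hg₂m : Measurable g₂ := measurable_const.indicator measurableSet_Iic
  set Y : ℕ → Ω → ℝ := fun i => g₁ ∘ Xs i with hY
  set Z : ℕ → Ω → ℝ := fun i => g₂ ∘ Xs i with hZ
  have hYm : ∀ i, Measurable (Y i) := fun i => hg₁m.comp (hXs i)
  have hZm : ∀ i, Measurable (Z i) := fun i => hg₂m.comp (hXs i)
  have hYind : iIndepFun Y μ := hindep.comp (fun _ => g₁) fun _ => hg₁m
  have hZind : iIndepFun Z μ := hindep.comp (fun _ => g₂) fun _ => hg₂m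
  have hYval : ∀ i ω, Y i ω = 0 ∨ Y i ω = 1 := by
    intro i ω
    by_cases h : Xs i ω ∈ Set.Iio (V + ε)
    · right; simp [hY, hg₁, Set.indicator_of_mem h]
    · left; simp [hY, hg₁, Set.indicator_of_notMem h]
  have hZval : ∀ i ω, Z i ω = 0 ∨ Z i ω = 1 := by
    intro i ω
    by_cases h : Xs i ω ∈ Set.Iic (V - ε)
    · right; simp [hZ, hg₂, Set.indicator_of_mem h]
    · left; simp [hZ, hg₂, Set.indicator_of_notMem h]
  -- means
  have hmean : ∀ (g : ℝ → ℝ), Measurable g →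
      ∀ i, ∫ ω, (g ∘ Xs i) ω ∂μ = ∫ x, g x ∂ν := by
    intro g hg i
    have h1 := integral_map (μ := μ) (φ := Xs i) (hXs i).aemeasurable
      (f := g) hg.aestronglyMeasurable
    rw [(hident i).map_eq] at h1
    simpa [Function.comp] using h1.symm
  have hYmean : ∀ i, ∫ ω, Y i ω ∂μ = (ν (Set.Iio (V + ε))).toReal := by
    intro i
    rw [hY]
    rw [hmean g₁ hg₁m i]
    rw [hg₁, integral_indicator measurableSet_Iio, setIntegral_const, smul_eq_mul, mul_one, measureReal_def]
  have hZmean : ∀ i, ∫ ω, Z i ω ∂μ = (ν (Set.Iic (V - ε))).toReal := by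
    intro i
    rw [hZ]
    rw [hmean g₂ hg₂m i]
    rw [hg₂, integral_indicator measurableSet_Iic, setIntegral_const, smul_eq_mul, mul_one, measureReal_def]
  have hp : β + l * ε ≤ (ν (Set.Iio (V + ε))).toReal := by
    rw [hIio]; exact hF1
  have hq : (ν (Set.Iic (V - ε))).toReal ≤ β - l * ε := hF2
  -- event inclusion
  set B₁ := {ω | ∑ i ∈ Finset.range n, Y i ω ≤ (∑ i ∈ Finset.range n, ∫ ω', Y i ω' ∂μ) - n * (l * ε)} with hB₁
  set B₂ := {ω | (∑ i ∈ Finset.range n, ∫ ω', Z i ω' ∂μ) + n * (l * ε) ≤ ∑ i ∈ Finset.range n, Z i ω} with hB₂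
  have hn' : (0:ℝ) < n := by exact_mod_cast hn
  have hsub : {ω | ε ≤ |empVaR Xs n ω β - V|} ⊆ B₁ ∪ B₂ := by
    intro ω hω
    rw [Set.mem_setOf_eq, le_abs] at hω
    rcases hω with h | h
    · -- V + ε ≤ empVaR
      left
      have hc : V + ε ≤ empVaR Xs n ω β := by linarith
      have hcount := emp_plus Xs n ω hβ.1 hn hc
      have hsum : ∑ i ∈ Finset.range n, Y i ω
          = (((Finset.range n).filter (fun i => Xs i ω < V + ε)).card : ℝ) := by
        have heq : ∀ i, Y i ω = if Xs i ω < V + ε then (1:ℝ) else 0 := fun i => by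
          by_cases h' : Xs i ω < V + ε <;>
            simp [hY, hg₁, Set.indicator_apply, Set.mem_Iio, h']
        rw [Finset.sum_congr rfl (fun i _ => heq i)]
        simp [Finset.sum_boole]
      have hsumInt : ∑ i ∈ Finset.range n, ∫ ω', Y i ω' ∂μ
          = n * (ν (Set.Iio (V + ε))).toReal := by
        rw [Finset.sum_congr rfl (fun i _ => hYmean i), Finset.sum_const,
          Finset.card_range, nsmul_eq_mul]
      rw [hB₁, Set.mem_setOf_eq, hsum, hsumInt]
      nlinarith
    · -- empVaR ≤ V - ε
      right
      have hc : empVaR Xs n ω β ≤ V - ε := by linarith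
      have hcount := emp_minus Xs n ω hβ.1 hβ.2.le hn hc
      have hsum : ∑ i ∈ Finset.range n, Z i ω
          = (((Finset.range n).filter (fun i => Xs i ω ≤ V - ε)).card : ℝ) := by
        have heq : ∀ i, Z i ω = if Xs i ω ≤ V - ε then (1:ℝ) else 0 := fun i => by
          by_cases h' : Xs i ω ≤ V - ε <;>
            simp [hZ, hg₂, Set.indicator_apply, Set.mem_Iic, h']
        rw [Finset.sum_congr rfl (fun i _ => heq i)]
        simp [Finset.sum_boole]
      have hsumInt : ∑ i ∈ Finset.range n, ∫ ω', Z i ω' ∂μ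
          = n * (ν (Set.Iic (V - ε))).toReal := by
        rw [Finset.sum_congr rfl (fun i _ => hZmean i), Finset.sum_const,
          Finset.card_range, nsmul_eq_mul]
      rw [hB₂, Set.mem_setOf_eq, hsum, hsumInt]
      nlinarith
  calc (μ {ω | ε ≤ |empVaR Xs n ω β - V|}).toReal
      ≤ ((μ B₁) + (μ B₂)).toReal := by
        refine ENNReal.toReal_mono ?_ ((measure_mono hsub).trans (measure_union_le _ _))
        exact ENNReal.add_ne_top.2 ⟨measure_ne_top _ _, measure_ne_top _ _⟩
    _ = (μ B₁).toReal + (μ B₂).toReal :=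
        ENNReal.toReal_add (measure_ne_top _ _) (measure_ne_top _ _)
    _ ≤ Real.exp (-2 * n * (l * ε) ^ 2) + Real.exp (-2 * n * (l * ε) ^ 2) := by
        refine add_le_add ?_ ?_
        · exact hoeff_le Y hYm hYind hYval n (l * ε) (by positivity)
        · exact hoeff_ge Z hZm hZind hZval n (l * ε) (by positivity)
    _ = 2 * Real.exp (-2 * n * l ^ 2 * ε ^ 2) := by
        rw [two_mul]
        congr 2 <;> ring
end

section
/- Let x₀ ∈ ℝ, let K > 0, and let f : [x₀, ∞) → (0, ∞) be continuously differentiable with |f'(x)| ≤ K·f(x)³ for all x ≥ x₀. Then f(x) ≥ f(x₀)/√(1 + 2K f(x₀)² (x − x₀)) for all x ≥ x₀, and consequently ∫_{x₀}^∞ f(x) dx = ∞. In particular, no probability density on ℝ that is positive and continuously differentiable on a half-line [x₀,∞) can satisfy a uniform bound |f'(x)|/f(x)³ ≤ K on that half-line. -/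
open MeasureTheory Set Real

/-- If `f` is positive and continuously differentiable on `[x₀, ∞)` with `|f'| ≤ K f³`, then
`f(x) ≥ f(x₀)/√(1 + 2K f(x₀)² (x − x₀))`, hence `∫_{x₀}^∞ f = ∞`; in particular `f` cannot be a
probability density (its integral over `ℝ` cannot equal `1`). -/
theorem stmt_12
    (x₀ K : ℝ) (hK : 0 < K) (f f' : ℝ → ℝ)
    (hfpos : ∀ x ∈ Set.Ici x₀, 0 < f x)
    (hfder : ∀ x ∈ Set.Ici x₀, HasDerivWithinAt f (f' x) (Set.Ici x₀) x)
    (hf'cont : ContinuousOn f' (Set.Ici x₀))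
    (hbound : ∀ x ∈ Set.Ici x₀, |f' x| ≤ K * f x ^ 3) :
    (∀ x ∈ Set.Ici x₀, f x₀ / Real.sqrt (1 + 2 * K * f x₀ ^ 2 * (x - x₀)) ≤ f x) ∧
      (∫⁻ x in Set.Ici x₀, ENNReal.ofReal (f x) = ⊤) ∧
      ¬ (∫⁻ x, ENNReal.ofReal (f x) = 1) := by
  have hx₀ : x₀ ∈ Set.Ici x₀ := Set.self_mem_Ici
  have hf₀ : 0 < f x₀ := hfpos x₀ hx₀
  set c : ℝ := 2 * K * f x₀ ^ 2 with hc
  have hcpos : 0 < c := by positivity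
  have hfcont : ContinuousOn f (Set.Ici x₀) := fun x hx =>
    (hfder x hx).continuousWithinAt
  -- ψ x = (f x)⁻² - 2 K x is antitone on Ici x₀
  have hanti : AntitoneOn (fun x => ((f x) ^ 2)⁻¹ - 2 * K * x) (Set.Ici x₀) := by
    apply antitoneOn_of_hasDerivWithinAt_nonpos (convex_Ici x₀)
      (f' := fun x => -((2 : ℕ) * f x ^ (2 - 1) * f' x) / (f x ^ 2) ^ 2 - 2 * K)
    · exact ((hfcont.pow 2).inv₀ (fun x hx => pow_ne_zero 2 (hfpos x hx).ne')).sub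
        ((continuous_const.mul continuous_id).continuousOn)
    · intro x hx
      rw [interior_Ici] at hx ⊢
      have hx' : x ∈ Set.Ici x₀ := Set.mem_Ici.2 (le_of_lt (Set.mem_Ioi.1 hx))
      have h1 : HasDerivWithinAt f (f' x) (Set.Ioi x₀) x :=
        (hfder x hx').mono Set.Ioi_subset_Ici_self
      have h2 : HasDerivWithinAt (fun y => ((f y) ^ 2)⁻¹)
          (-((2 : ℕ) * f x ^ (2 - 1) * f' x) / (f x ^ 2) ^ 2) (Set.Ioi x₀) x :=
        (h1.pow 2).inv (pow_ne_zero 2 (hfpos x hx').ne')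
      have h3 : HasDerivWithinAt (fun y => 2 * K * y) (2 * K) (Set.Ioi x₀) x := by
        simpa using (hasDerivWithinAt_id x (Set.Ioi x₀)).const_mul (2 * K)
      exact h2.sub h3
    · intro x hx
      rw [interior_Ici] at hx
      have hx' : x ∈ Set.Ici x₀ := Set.mem_Ici.2 (le_of_lt (Set.mem_Ioi.1 hx))
      have hfx : 0 < f x := hfpos x hx'
      have hb := (abs_le.1 (hbound x hx')).1
      have h4 : -((2 : ℕ) * f x ^ (2 - 1) * f' x) / (f x ^ 2) ^ 2 ≤ 2 * K := by
        rw [div_le_iff₀ (by positivity)]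
        push_cast
        nlinarith [pow_pos hfx 3, pow_pos hfx 4, sq_nonneg (f x)]
      linarith
  -- main pointwise lower bound
  have hmain : ∀ x ∈ Set.Ici x₀, f x₀ / Real.sqrt (1 + c * (x - x₀)) ≤ f x := by
    intro x hx
    have hfx : 0 < f x := hfpos x hx
    have hDpos : 0 < 1 + c * (x - x₀) := by
      have : (0:ℝ) ≤ c * (x - x₀) := mul_nonneg hcpos.le (by simpa using hx)
      linarith
    have hψ := hanti hx₀ hx (by simpa using hx)
    simp only at hψ
    have hψ' : ((f x) ^ 2)⁻¹ ≤ ((f x₀) ^ 2)⁻¹ + 2 * K * (x - x₀) := by linarith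
    have heq : ((f x₀) ^ 2)⁻¹ + 2 * K * (x - x₀) = (1 + c * (x - x₀)) / f x₀ ^ 2 := by
      rw [hc]; field_simp
    rw [heq, ← one_div] at hψ'
    have h2 := (div_le_div_iff₀ (by positivity) (by positivity)).1 hψ'
    -- h2 : 1 * f x₀ ^ 2 ≤ (1 + c * (x - x₀)) * f x ^ 2
    have h2' : f x₀ ^ 2 ≤ f x ^ 2 * (1 + c * (x - x₀)) := by linarith [h2]
    have h3 : Real.sqrt (f x₀ ^ 2) ≤ Real.sqrt (f x ^ 2 * (1 + c * (x - x₀))) :=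
      Real.sqrt_le_sqrt h2'
    rw [Real.sqrt_sq hf₀.le, Real.sqrt_mul (by positivity), Real.sqrt_sq hfx.le] at h3
    rw [div_le_iff₀ (Real.sqrt_pos.2 hDpos)]
    exact h3
  have htop : ∫⁻ x in Set.Ici x₀, ENNReal.ofReal (f x) = ⊤ := by
    by_contra hne
    have hmeas : AEStronglyMeasurable f (volume.restrict (Set.Ici x₀)) :=
      hfcont.aestronglyMeasurable measurableSet_Ici
    have hnonneg : 0 ≤ᵐ[volume.restrict (Set.Ici x₀)] f :=
      (ae_restrict_iff' measurableSet_Ici).2 (Filter.Eventually.of_forall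
        fun x hx => (hfpos x hx).le)
    have hint : IntegrableOn f (Set.Ici x₀) :=
      (lintegral_ofReal_ne_top_iff_integrable hmeas hnonneg).1 hne
    set M : ℝ := max x₀ 1 with hM
    have hM0 : (0:ℝ) < M := lt_of_lt_of_le one_pos (le_max_right _ _)
    set C : ℝ := 1 + c + c * |x₀| with hC
    have hCpos : 0 < C := by positivity
    set a : ℝ := f x₀ / Real.sqrt C with ha
    have hapos : 0 < a := div_pos hf₀ (Real.sqrt_pos.2 hCpos)
    have hcomp : ∀ x ∈ Set.Ioi M, a * x ^ (-(1:ℝ)/2) ≤ f x := by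
      intro x hx
      have hx1 : (1:ℝ) < x := lt_of_le_of_lt (le_max_right _ _) hx
      have hxx₀ : x₀ ≤ x := le_of_lt (lt_of_le_of_lt (le_max_left _ _) hx)
      have hxpos : (0:ℝ) < x := lt_trans one_pos hx1
      have hDle : 1 + c * (x - x₀) ≤ C * x := by
        have h1 : c * (x - x₀) ≤ c * x + c * |x₀| * x := by
          nlinarith [mul_le_mul_of_nonneg_left (neg_le_abs x₀) hcpos.le,
            mul_nonneg (mul_nonneg hcpos.le (abs_nonneg x₀)) (sub_nonneg.2 hx1.le)]
        nlinarith [hx1]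
      have hsq : Real.sqrt (1 + c * (x - x₀)) ≤ Real.sqrt C * Real.sqrt x := by
        rw [← Real.sqrt_mul hCpos.le]
        exact Real.sqrt_le_sqrt hDle
      have hDpos : 0 < 1 + c * (x - x₀) := by nlinarith [hxx₀]
      have hrw : x ^ (-(1:ℝ)/2) = (Real.sqrt x)⁻¹ := by
        rw [show (-(1:ℝ)/2) = -(1/2) by ring, Real.rpow_neg hxpos.le,
          Real.sqrt_eq_rpow]
      have key : a * x ^ (-(1:ℝ)/2) ≤ f x₀ / Real.sqrt (1 + c * (x - x₀)) := by
        rw [hrw, ha, ← div_eq_mul_inv, div_div]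
        exact div_le_div_of_nonneg_left hf₀.le (Real.sqrt_pos.2 hDpos) hsq
      exact key.trans (hmain x hxx₀)
    have hIciM : Set.Ioi M ⊆ Set.Ici x₀ :=
      fun x hx => Set.mem_Ici.2 (le_of_lt (lt_of_le_of_lt (le_max_left _ _) (Set.mem_Ioi.1 hx)))
    have hintM : IntegrableOn f (Set.Ioi M) := hint.mono hIciM le_rfl
    have hmg : AEStronglyMeasurable (fun x : ℝ => a * x ^ (-(1:ℝ)/2))
        (volume.restrict (Set.Ioi M)) :=
      (measurable_const.mul (measurable_id.pow_const _)).aestronglyMeasurable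
    have hintg : IntegrableOn (fun x : ℝ => a * x ^ (-(1:ℝ)/2)) (Set.Ioi M) := by
      apply Integrable.mono' hintM hmg
      rw [ae_restrict_iff' measurableSet_Ioi]
      refine Filter.Eventually.of_forall fun x hx => ?_
      have hxpos : (0:ℝ) < x := lt_trans hM0 hx
      rw [Real.norm_eq_abs, abs_of_nonneg (by positivity)]
      exact hcomp x hx
    have hintg' : IntegrableOn (fun x : ℝ => x ^ (-(1:ℝ)/2)) (Set.Ioi M) := by
      have := hintg.const_mul a⁻¹
      simpa [IntegrableOn, ← mul_assoc, inv_mul_cancel₀ hapos.ne'] using this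
    rw [integrableOn_Ioi_rpow_iff hM0] at hintg'
    linarith
  refine ⟨hmain, htop, ?_⟩
  intro h1
  have hle : (∫⁻ x in Set.Ici x₀, ENNReal.ofReal (f x)) ≤ ∫⁻ x, ENNReal.ofReal (f x) :=
    setLIntegral_le_lintegral _ _
  rw [htop, h1] at hle
  simp at hle
end

section
/- Let X be Gaussian with mean zero and variance σ² > 0, with cumulative distribution function F, let n ≥ 1 be an integer, set B_n = √(2σ² log n) and η = F(B_n). Then ∫_η^1 V_β dβ ≤ 2√(2σ²/e)·√(1−η) ≤ 2√(2σ²/e)·exp(−B_n²/(4σ²)) = 2√(2σ²/e)/√n ≤ 2σ/√n. -/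
open MeasureTheory ProbabilityTheory Set Real
open scoped NNReal ENNReal

lemma stmt14_gauss_shift (v : ℝ≥0) (hv : (0:ℝ) < v) (t y : ℝ) :
    rexp (t * y) * gaussianPDFReal 0 v y
      = rexp ((v:ℝ) * t ^ 2 / 2) * gaussianPDFReal ((v:ℝ) * t) v y := by
  simp only [gaussianPDFReal, sub_zero]
  rw [mul_left_comm, mul_left_comm (rexp ((v:ℝ) * t ^ 2 / 2)), ← Real.exp_add, ← Real.exp_add]
  congr 2
  field_simp
  ring

lemma stmt14_tail_le (v : ℝ≥0) (hv : v ≠ 0) (x : ℝ) (hx : 0 ≤ x) :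
    (gaussianReal 0 v (Set.Ioi x)).toReal ≤ rexp (-x ^ 2 / (2 * (v:ℝ))) := by
  have hv0 : (0:ℝ) < v := NNReal.coe_pos.mpr (pos_iff_ne_zero.mpr hv)
  set t : ℝ := x / (v:ℝ) with htdef
  have ht : 0 ≤ t := div_nonneg hx hv0.le
  have h2 : (fun y => rexp (t * (y - x)) * gaussianPDFReal 0 v y)
      = fun y => (rexp (-(t * x)) * rexp ((v:ℝ) * t ^ 2 / 2)) * gaussianPDFReal ((v:ℝ) * t) v y := by
    ext y
    rw [show t * (y - x) = -(t * x) + t * y by ring, Real.exp_add, mul_assoc,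
      stmt14_gauss_shift v hv0]
    ring
  have key : gaussianReal 0 v (Set.Ioi x) ≤ ENNReal.ofReal (rexp (-x ^ 2 / (2 * (v:ℝ)))) := by
    rw [gaussianReal_apply 0 hv]
    calc ∫⁻ y in Set.Ioi x, gaussianPDF 0 v y
        ≤ ∫⁻ y in Set.Ioi x, ENNReal.ofReal (rexp (t * (y - x)) * gaussianPDFReal 0 v y) := by
          refine setLIntegral_mono ?_ ?_
          · exact ((((measurable_id.sub_const x).const_mul t).exp).mul
              (measurable_gaussianPDFReal 0 v)).ennreal_ofReal
          · intro y hy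
            rw [gaussianPDF]
            apply ENNReal.ofReal_le_ofReal
            nth_rewrite 1 [← one_mul (gaussianPDFReal 0 v y)]
            exact mul_le_mul_of_nonneg_right
              (Real.one_le_exp (mul_nonneg ht (sub_nonneg.2 (le_of_lt hy))))
              (gaussianPDFReal_nonneg _ _ _)
      _ ≤ ∫⁻ y, ENNReal.ofReal (rexp (t * (y - x)) * gaussianPDFReal 0 v y) :=
          setLIntegral_le_lintegral _ _
      _ = ENNReal.ofReal (∫ y, rexp (t * (y - x)) * gaussianPDFReal 0 v y) := by
          refine (ofReal_integral_eq_lintegral_ofReal ?_ ?_).symm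
          · rw [h2]; exact (integrable_gaussianPDFReal _ _).const_mul _
          · exact ae_of_all _ fun y =>
              mul_nonneg (Real.exp_nonneg _) (gaussianPDFReal_nonneg _ _ _)
      _ = ENNReal.ofReal (rexp (-(t * x)) * rexp ((v:ℝ) * t ^ 2 / 2) * 1) := by
          rw [h2, MeasureTheory.integral_const_mul, integral_gaussianPDFReal_eq_one _ hv]
      _ = ENNReal.ofReal (rexp (-x ^ 2 / (2 * (v:ℝ)))) := by
          rw [mul_one, ← Real.exp_add]
          congr 1
          rw [htdef]
          field_simp
          ring
  exact ENNReal.toReal_le_of_le_ofReal (Real.exp_nonneg _) key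

/-- Gaussian tail-quantile integral bound: with `B_n = √(2σ² log n)` and `η = F(B_n)`,
`∫_η^1 V_β dβ ≤ 2√(2σ²/e)·√(1−η) ≤ 2√(2σ²/e)·exp(−B_n²/(4σ²)) = 2√(2σ²/e)/√n ≤ 2σ/√n`. -/
theorem stmt_14
    (σ : ℝ) (hσ : 0 < σ) (n : ℕ) (hn : 1 ≤ n)
    (ν : MeasureTheory.Measure ℝ)
    (hν : ν = ProbabilityTheory.gaussianReal 0 ⟨σ ^ 2, sq_nonneg σ⟩)
    (Bn η : ℝ) (hBn : Bn = Real.sqrt (2 * σ ^ 2 * Real.log n)) (hη : η = cdfFn ν Bn) :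
    (∫ β in η..1, VaR ν β)
        ≤ 2 * Real.sqrt (2 * σ ^ 2 / Real.exp 1) * Real.sqrt (1 - η) ∧
      2 * Real.sqrt (2 * σ ^ 2 / Real.exp 1) * Real.sqrt (1 - η)
        ≤ 2 * Real.sqrt (2 * σ ^ 2 / Real.exp 1) * Real.exp (-(Bn ^ 2) / (4 * σ ^ 2)) ∧
      2 * Real.sqrt (2 * σ ^ 2 / Real.exp 1) * Real.exp (-(Bn ^ 2) / (4 * σ ^ 2))
        = 2 * Real.sqrt (2 * σ ^ 2 / Real.exp 1) / Real.sqrt n ∧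
      2 * Real.sqrt (2 * σ ^ 2 / Real.exp 1) / Real.sqrt n ≤ 2 * σ / Real.sqrt n := by
  have hσ2 : (0:ℝ) < σ ^ 2 := by positivity
  set v : ℝ≥0 := ⟨σ ^ 2, sq_nonneg σ⟩ with hvdef
  have hvc : (v : ℝ) = σ ^ 2 := rfl
  have hv : v ≠ 0 := by
    intro h
    rw [← NNReal.coe_eq_zero, hvc] at h
    exact hσ2.ne' h
  have hprob : IsProbabilityMeasure ν := hν ▸ inferInstance
  have hmono : Monotone (cdfFn ν) := fun a b hab =>
    ENNReal.toReal_mono (measure_ne_top ν _) (measure_mono (Set.Iic_subset_Iic.2 hab))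
  have hsum : ∀ x : ℝ, cdfFn ν x + (ν (Set.Ioi x)).toReal = 1 := by
    intro x
    have h1 : ν (Set.Iic x) + ν (Set.Ioi x) = 1 := by
      rw [← measure_union (Set.Iic_disjoint_Ioi le_rfl) measurableSet_Ioi, Set.Iic_union_Ioi,
        measure_univ]
    have := congrArg ENNReal.toReal h1
    rwa [ENNReal.toReal_add (measure_ne_top ν _) (measure_ne_top ν _), ENNReal.toReal_one] at this
  have htail : ∀ x : ℝ, 0 ≤ x → 1 - cdfFn ν x ≤ rexp (-x ^ 2 / (2 * σ ^ 2)) := by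
    intro x hx
    have := stmt14_tail_le v hv x hx
    rw [hvc] at this
    rw [← hν] at this
    linarith [hsum x]
  have hBn0 : 0 ≤ Bn := hBn ▸ Real.sqrt_nonneg _
  -- η < 1
  have hIoiBn : 0 < ν (Set.Ioi Bn) := by
    rw [hν, gaussianReal_apply 0 hv, lintegral_pos_iff_support (measurable_gaussianPDF 0 v)]
    have hsupp : Function.support (gaussianPDF 0 v) = Set.univ :=
      Set.eq_univ_of_forall fun y => (gaussianPDF_pos 0 hv y).ne'
    rw [hsupp, Measure.restrict_apply MeasurableSet.univ, Set.univ_inter, Real.volume_Ioi]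
    exact ENNReal.zero_lt_top
  have hηlt1 : η < 1 := by
    have := hsum Bn
    have h2 : 0 < (ν (Set.Ioi Bn)).toReal :=
      ENNReal.toReal_pos hIoiBn.ne' (measure_ne_top ν _)
    rw [hη]; linarith
  have hη0 : 0 ≤ η := hη ▸ ENNReal.toReal_nonneg
  set C : ℝ := Real.sqrt (2 * σ ^ 2 / Real.exp 1) with hCdef
  have hC : 0 ≤ C := Real.sqrt_nonneg _
  -- pointwise facts on Ioo η 1
  have hsubset : ∀ β : ℝ, η < β → {c : ℝ | β ≤ cdfFn ν c} ⊆ Set.Ici Bn := by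
    intro β hβ c hc
    by_contra hlt
    simp only [Set.mem_Ici, not_le] at hlt
    have : cdfFn ν c ≤ η := hη ▸ hmono hlt.le
    exact absurd hc (by simp only [Set.mem_setOf_eq]; linarith)
  have hmem : ∀ β ∈ Set.Ioo η 1,
      Real.sqrt (2 * σ ^ 2 * (-Real.log (1 - β))) ∈ {c : ℝ | β ≤ cdfFn ν c} := by
    intro β hβ
    obtain ⟨hβ1, hβ2⟩ := hβ
    have hβ0 : 0 < β := lt_of_le_of_lt hη0 hβ1
    have h1β : 0 < 1 - β := by linarith
    have hL : 0 ≤ -Real.log (1 - β) := by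
      have := Real.log_nonpos h1β.le (by linarith)
      linarith
    have harg : 0 ≤ 2 * σ ^ 2 * (-Real.log (1 - β)) := by positivity
    have hsq : Real.sqrt (2 * σ ^ 2 * (-Real.log (1 - β))) ^ 2
        = 2 * σ ^ 2 * (-Real.log (1 - β)) := Real.sq_sqrt harg
    have := htail _ (Real.sqrt_nonneg (2 * σ ^ 2 * (-Real.log (1 - β))))
    rw [hsq] at this
    have hexp : rexp (-(2 * σ ^ 2 * (-Real.log (1 - β))) / (2 * σ ^ 2)) = 1 - β := by
      rw [show -(2 * σ ^ 2 * (-Real.log (1 - β))) / (2 * σ ^ 2) = Real.log (1 - β) by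
        field_simp]
      exact Real.exp_log h1β
    rw [hexp] at this
    simp only [Set.mem_setOf_eq]
    linarith
  have hVaR_le : ∀ β ∈ Set.Ioo η 1, VaR ν β ≤ C * (1 - β) ^ (-(1/2) : ℝ) := by
    intro β hβ
    have hbdd : BddBelow {c : ℝ | β ≤ cdfFn ν c} :=
      BddBelow.mono (hsubset β hβ.1) bddBelow_Ici
    have h1 : VaR ν β ≤ Real.sqrt (2 * σ ^ 2 * (-Real.log (1 - β))) :=
      csInf_le hbdd (hmem β hβ)
    have h1β : 0 < 1 - β := by linarith [hβ.2]
    -- log bound : -log(1-β) = log((1-β)⁻¹) ≤ (1-β)⁻¹ / e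
    have hlog : -Real.log (1 - β) ≤ (1 - β)⁻¹ / Real.exp 1 := by
      have hz : 0 < (1 - β)⁻¹ / Real.exp 1 := by positivity
      have h2 := Real.log_le_sub_one_of_pos hz
      rw [Real.log_div (by positivity) (Real.exp_ne_zero 1), Real.log_exp,
        Real.log_inv] at h2
      linarith
    have h3 : Real.sqrt (2 * σ ^ 2 * (-Real.log (1 - β)))
        ≤ Real.sqrt (2 * σ ^ 2 / Real.exp 1 * (1 - β)⁻¹) := by
      apply Real.sqrt_le_sqrt
      rw [div_mul_eq_mul_div, mul_comm (2 * σ ^ 2) (1 - β)⁻¹, ← div_mul_eq_mul_div,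
        mul_comm ((1 - β)⁻¹ / rexp 1)]
      exact mul_le_mul_of_nonneg_left (by rw [div_eq_mul_inv, mul_comm] at hlog ⊢; exact hlog)
        (by positivity)
    have h4 : Real.sqrt (2 * σ ^ 2 / Real.exp 1 * (1 - β)⁻¹) = C * (1 - β) ^ (-(1/2) : ℝ) := by
      rw [Real.sqrt_mul (by positivity), Real.sqrt_inv, Real.rpow_neg h1β.le,
        ← Real.sqrt_eq_rpow]
    linarith [h3, h4.symm ▸ h3]
  have hVaR_ge : ∀ β ∈ Set.Ioo η 1, 0 ≤ VaR ν β := by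
    intro β hβ
    refine le_csInf ⟨_, hmem β hβ⟩ fun c hc => le_trans hBn0 (hsubset β hβ.1 hc)
  have hmonoOn : MonotoneOn (VaR ν) (Set.Ioo η 1) := by
    intro a ha b hb hab
    refine csInf_le_csInf (BddBelow.mono (hsubset a ha.1) bddBelow_Ici) ⟨_, hmem b hb⟩ ?_
    intro c hc
    exact le_trans hab hc
  -- integrability of majorant
  have hIntII : IntervalIntegrable (fun β : ℝ => C * (1 - β) ^ (-(1/2) : ℝ)) volume η 1 := by
    have h1 : IntervalIntegrable (fun x : ℝ => x ^ (-(1/2) : ℝ)) volume (1 - η) 0 :=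
      intervalIntegral.intervalIntegrable_rpow' (by norm_num)
    have h2 := (h1.comp_sub_left 1)
    simp only [sub_sub_cancel, sub_zero] at h2
    exact h2.const_mul C
  have hIntM : IntegrableOn (fun β : ℝ => C * (1 - β) ^ (-(1/2) : ℝ)) (Set.Ioo η 1) volume := by
    exact (hIntII.1).mono_set Set.Ioo_subset_Ioc_self
  have hIntV : IntegrableOn (VaR ν) (Set.Ioo η 1) volume := by
    refine Integrable.mono' hIntM
      ((aemeasurable_restrict_of_monotoneOn measurableSet_Ioo hmonoOn).aestronglyMeasurable) ?_
    refine (ae_restrict_mem measurableSet_Ioo).mono fun β hβ => ?_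
    rw [Real.norm_of_nonneg (hVaR_ge β hβ)]
    exact hVaR_le β hβ
  -- the integral computation
  have hcomp : ∫ β in η..1, C * (1 - β) ^ (-(1/2) : ℝ) = 2 * C * Real.sqrt (1 - η) := by
    rw [intervalIntegral.integral_const_mul]
    rw [show (fun β : ℝ => (1 - β) ^ (-(1/2) : ℝ)) = fun β : ℝ => ((fun x : ℝ => x ^ (-(1/2) : ℝ)) (1 - β)) from rfl]
    rw [intervalIntegral.integral_comp_sub_left (fun x : ℝ => x ^ (-(1/2) : ℝ)) 1]
    rw [sub_self]
    rw [integral_rpow (Or.inl (by norm_num))]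
    rw [show (-(1/2) : ℝ) + 1 = (1/2 : ℝ) by norm_num]
    rw [Real.zero_rpow (by norm_num), ← Real.sqrt_eq_rpow]
    ring
  have part1 : (∫ β in η..1, VaR ν β) ≤ 2 * C * Real.sqrt (1 - η) := by
    rw [intervalIntegral.integral_of_le hηlt1.le, integral_Ioc_eq_integral_Ioo]
    calc ∫ β in Set.Ioo η 1, VaR ν β
        ≤ ∫ β in Set.Ioo η 1, C * (1 - β) ^ (-(1/2) : ℝ) :=
          setIntegral_mono_on hIntV hIntM measurableSet_Ioo hVaR_le
      _ = ∫ β in η..1, C * (1 - β) ^ (-(1/2) : ℝ) := by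
          rw [intervalIntegral.integral_of_le hηlt1.le, integral_Ioc_eq_integral_Ioo]
      _ = 2 * C * Real.sqrt (1 - η) := hcomp
  have part2 : 2 * C * Real.sqrt (1 - η) ≤ 2 * C * rexp (-(Bn ^ 2) / (4 * σ ^ 2)) := by
    have h1 : 1 - η ≤ rexp (-Bn ^ 2 / (2 * σ ^ 2)) := hη ▸ htail Bn hBn0
    have h2 : Real.sqrt (1 - η) ≤ rexp (-(Bn ^ 2) / (4 * σ ^ 2)) := by
      calc Real.sqrt (1 - η) ≤ Real.sqrt (rexp (-Bn ^ 2 / (2 * σ ^ 2))) := Real.sqrt_le_sqrt h1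
        _ = rexp ((-Bn ^ 2 / (2 * σ ^ 2)) / 2) := (Real.exp_half _).symm
        _ = rexp (-(Bn ^ 2) / (4 * σ ^ 2)) := by ring_nf
    exact mul_le_mul_of_nonneg_left h2 (by positivity)
  have hn1 : (1:ℝ) ≤ (n:ℝ) := by exact_mod_cast hn
  have hnpos : (0:ℝ) < (n:ℝ) := by linarith
  have part3 : 2 * C * rexp (-(Bn ^ 2) / (4 * σ ^ 2)) = 2 * C / Real.sqrt n := by
    have hBn2 : Bn ^ 2 = 2 * σ ^ 2 * Real.log n := by
      rw [hBn]
      exact Real.sq_sqrt (mul_nonneg (by positivity) (Real.log_nonneg hn1))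
    have hexp : rexp (-(Bn ^ 2) / (4 * σ ^ 2)) = (Real.sqrt n)⁻¹ := by
      rw [hBn2, show -(2 * σ ^ 2 * Real.log n) / (4 * σ ^ 2) = -(Real.log n / 2) by
        field_simp; ring]
      rw [Real.exp_neg, Real.exp_half, Real.exp_log hnpos]
    rw [hexp, div_eq_mul_inv]
  have part4 : 2 * C / Real.sqrt n ≤ 2 * σ / Real.sqrt n := by
    have h2e : (2:ℝ) ≤ Real.exp 1 := by
      have := Real.add_one_le_exp 1; linarith
    have hCσ : C ≤ σ := by
      rw [hCdef]
      calc Real.sqrt (2 * σ ^ 2 / Real.exp 1) ≤ Real.sqrt (σ ^ 2) := by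
            apply Real.sqrt_le_sqrt
            rw [div_le_iff₀ (Real.exp_pos 1)]
            nlinarith
        _ = σ := Real.sqrt_sq hσ.le
    gcongr
  exact ⟨part1, part2, part3, part4⟩
end
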